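/- Let A and E be nonempty finite types, and let ρ be a positive semidefinite complex matrix indexed by A × E with trace 1. Let ρ_A := tr_E ρ and ρ_E := tr_A ρ denote its partial traces, i.e., ρ_A(a,a') = Σ_e ρ((a,e),(a',e)) and ρ_E(e,e') = Σ_a ρ((a,e),(a,e')). Then for every unit vector φ : A → ℂ, F(ρ, P_φ ⊗ ρ_E) ≥ (F(ρ_A, P_φ))², where P_φ := φ·φᴴ is the rank-one orthogonal projection onto φ and ⊗ is the Kronecker product. (Lemma 1 of the paper.) -/

import Mathlib

open scoped Kronecker ComplexOrder

open Classical in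
/-- The positive semidefinite square root of a positive semidefinite matrix
(junk value `0` on matrices that are not positive semidefinite). -/
noncomputable def matSqrt {n : Type*} [Fintype n] [DecidableEq n]
    (A : Matrix n n ℂ) : Matrix n n ℂ :=
  if h : A.PosSemidef then
    h.1.eigenvectorUnitary.1 * Matrix.diagonal ((↑) ∘ (√·) ∘ h.1.eigenvalues) *
      (star h.1.eigenvectorUnitary : Matrix n n ℂ)
  else 0

/-- The fidelity `F(ρ,σ) = (tr √(√ρ · σ · √ρ))²` of two positive semidefinite matrices. -/
noncomputable def fidelity {n : Type*} [Fintype n] [DecidableEq n]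
    (ρ σ : Matrix n n ℂ) : ℝ :=
  (((matSqrt (matSqrt ρ * σ * matSqrt ρ)).trace).re) ^ 2

namespace Helpers
set_option linter.unusedSectionVars false
open Matrix
variable {n : Type*} [Fintype n] [DecidableEq n]

open MatrixOrder in
lemma matSqrt_eq {A : Matrix n n ℂ} (h : A.PosSemidef) : matSqrt A = CFC.sqrt A := by
  have h0 : 0 ≤ A := h.nonneg
  rw [CFC.sqrt_eq_real_sqrt A, cfcₙ_eq_cfc (hf0 := by simp), h.1.cfc_eq, Matrix.IsHermitian.cfc,
    Unitary.conjStarAlgAut_apply, matSqrt, dif_pos h]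
  rfl

open MatrixOrder in
lemma matSqrt_posSemidef {A : Matrix n n ℂ} (h : A.PosSemidef) :
    (matSqrt A).PosSemidef := by
  rw [matSqrt_eq h]; exact Matrix.nonneg_iff_posSemidef.mp (CFC.sqrt_nonneg A)

open MatrixOrder in
lemma matSqrt_mul_self {A : Matrix n n ℂ} (h : A.PosSemidef) :
    matSqrt A * matSqrt A = A := by rw [matSqrt_eq h]; exact CFC.sqrt_mul_sqrt_self A h.nonneg

open MatrixOrder in
lemma matSqrt_unique {A B : Matrix n n ℂ} (hB : B.PosSemidef) (hBA : B * B = A) :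
    matSqrt A = B := by
  have hA : A.PosSemidef := by
    rw [← hBA]; rw [(show B * B = Bᴴ * B by rw [hB.isHermitian.eq])]
    exact posSemidef_conjTranspose_mul_self B
  rw [matSqrt_eq hA]
  exact (CFC.sqrt_eq_iff A B hA.nonneg hB.nonneg).mpr hBA

lemma matSqrt_isHermitian {A : Matrix n n ℂ} (h : A.PosSemidef) :
    (matSqrt A).IsHermitian := (matSqrt_posSemidef h).isHermitian

lemma psd_trace_re_nonneg {M : Matrix n n ℂ} (hM : M.PosSemidef) : 0 ≤ M.trace.re := by
  rw [Matrix.trace]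
  have h : ∀ i, 0 ≤ (M i i).re := by
    intro i
    have := hM.re_dotProduct_nonneg (Pi.single i 1)
    simpa [Matrix.mulVec_single, dotProduct, Pi.single_apply, Finset.sum_ite_eq',
      apply_ite] using this
  simpa [Matrix.diag] using Finset.sum_nonneg (fun i _ => h i)

omit [DecidableEq n] in
lemma psd_smul {M : Matrix n n ℂ} (hM : M.PosSemidef) {c : ℝ} (hc : 0 ≤ c) :
    ((c : ℂ) • M).PosSemidef := by
  refine Matrix.posSemidef_iff_dotProduct_mulVec.mpr ⟨?_, ?_⟩
  · unfold Matrix.IsHermitian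
    rw [Matrix.conjTranspose_smul, hM.isHermitian.eq]
    congr 1
    exact Complex.conj_ofReal c
  · intro x
    rw [Matrix.smul_mulVec, dotProduct_smul]
    have h0 : (0:ℂ) ≤ (c:ℂ) := by
      rw [Complex.le_def]; simp [hc]
    exact mul_nonneg h0 (hM.dotProduct_mulVec_nonneg x)

lemma trace_mul_psd_re_nonneg {A B : Matrix n n ℂ} (hA : A.PosSemidef) (hB : B.PosSemidef) :
    0 ≤ (A * B).trace.re := by
  have h1 : A * B = matSqrt A * (matSqrt A * B) := by
    rw [← mul_assoc, matSqrt_mul_self hA]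
  rw [h1, Matrix.trace_mul_comm]
  have : matSqrt A * B * matSqrt A = (matSqrt A)ᴴ * B * matSqrt A := by
    rw [(matSqrt_isHermitian hA).eq]
  rw [this]
  exact psd_trace_re_nonneg (hB.conjTranspose_mul_mul_same _)

lemma proj_compl_psd {Q : Matrix n n ℂ} (hQ : Q.IsHermitian) (hQ2 : Q * Q = Q) :
    (1 - Q).PosSemidef := by
  have h : (1 - Q) = (1 - Q)ᴴ * (1 - Q) := by
    rw [Matrix.conjTranspose_sub, Matrix.conjTranspose_one, hQ.eq]
    rw [Matrix.sub_mul, Matrix.mul_sub, Matrix.mul_sub, hQ2]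
    simp
  rw [h]; exact posSemidef_conjTranspose_mul_self _

lemma psd_sum {ι : Type*} (s : Finset ι) (f : ι → Matrix n n ℂ)
    (h : ∀ i ∈ s, (f i).PosSemidef) : (∑ i ∈ s, f i).PosSemidef :=
  Finset.sum_induction f _ (fun _ _ ha hb => ha.add hb) Matrix.PosSemidef.zero h

noncomputable def nsq (v : n → ℂ) : ℝ := ∑ i, Complex.normSq (v i)

omit [DecidableEq n] in
lemma star_dot_self (v : n → ℂ) : star v ⬝ᵥ v = ((nsq v : ℝ) : ℂ) := by
  unfold nsq
  rw [dotProduct]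
  push_cast
  refine Finset.sum_congr rfl fun i _ => ?_
  simp [Complex.normSq_eq_conj_mul_self, Complex.star_def]

omit [DecidableEq n] in
lemma nsq_nonneg (v : n → ℂ) : 0 ≤ nsq v :=
  Finset.sum_nonneg fun i _ => Complex.normSq_nonneg _

omit [DecidableEq n] in
lemma cs_re_dot (u w : n → ℂ) :
    (star u ⬝ᵥ w).re ≤ Real.sqrt (nsq u) * Real.sqrt (nsq w) := by
  have hnorm : ∀ v : n → ℂ, ‖(WithLp.equiv 2 (n → ℂ)).symm v‖ = Real.sqrt (nsq v) := by
    intro v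
    rw [EuclideanSpace.norm_eq]
    congr 1
    refine Finset.sum_congr rfl fun i _ => ?_
    simp [Complex.sq_norm, nsq]
  have hinner : (inner ℂ ((WithLp.equiv 2 (n → ℂ)).symm u) ((WithLp.equiv 2 (n → ℂ)).symm w))
      = star u ⬝ᵥ w := by rw [dotProduct_comm]; rfl
  calc (star u ⬝ᵥ w).re
      = (inner ℂ ((WithLp.equiv 2 (n → ℂ)).symm u) ((WithLp.equiv 2 (n → ℂ)).symm w) : ℂ).re := by
        rw [hinner]
    _ ≤ ‖(inner ℂ ((WithLp.equiv 2 (n → ℂ)).symm u) ((WithLp.equiv 2 (n → ℂ)).symm w) : ℂ)‖ :=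
        Complex.re_le_norm _
    _ ≤ ‖(WithLp.equiv 2 (n → ℂ)).symm u‖ * ‖(WithLp.equiv 2 (n → ℂ)).symm w‖ :=
        norm_inner_le_norm _ _
    _ = _ := by rw [hnorm, hnorm]

omit [DecidableEq n] in
lemma dot_conjTranspose_mul (M : Matrix n n ℂ) (x : n → ℂ) :
    star x ⬝ᵥ ((Mᴴ * M) *ᵥ x) = ((nsq (M *ᵥ x) : ℝ) : ℂ) := by
  rw [← Matrix.mulVec_mulVec, Matrix.dotProduct_mulVec, ← Matrix.star_mulVec,
    star_dot_self]

lemma flip_contraction {W : Matrix n n ℂ} (h : (1 - W * Wᴴ).PosSemidef) :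
    (1 - Wᴴ * W).PosSemidef := by
  have hsub : ∀ (M : Matrix n n ℂ) (x : n → ℂ),
      star x ⬝ᵥ ((1 - M) *ᵥ x) = star x ⬝ᵥ x - star x ⬝ᵥ (M *ᵥ x) := by
    intro M x
    rw [Matrix.sub_mulVec, dotProduct_sub, Matrix.one_mulVec]
  have hWWH : ∀ y : n → ℂ, nsq (Wᴴ *ᵥ y) ≤ nsq y := by
    intro y
    have h2 := h.dotProduct_mulVec_nonneg y
    rw [hsub, star_dot_self] at h2
    have : W * Wᴴ = (Wᴴ)ᴴ * Wᴴ := by rw [conjTranspose_conjTranspose]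
    rw [this, dot_conjTranspose_mul] at h2
    rw [← Complex.ofReal_sub] at h2
    have := Complex.zero_le_real.mp h2
    linarith
  refine Matrix.posSemidef_iff_dotProduct_mulVec.mpr ⟨?_, ?_⟩
  · exact (isHermitian_one.sub (isHermitian_conjTranspose_mul_self W))
  · intro x
    rw [hsub, star_dot_self, dot_conjTranspose_mul, ← Complex.ofReal_sub]
    rw [Complex.zero_le_real]
    set a := Real.sqrt (nsq (W *ᵥ x)) with ha
    set b := Real.sqrt (nsq x) with hb
    set c := Real.sqrt (nsq (Wᴴ *ᵥ (W *ᵥ x))) with hc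
    have ha2 : a ^ 2 = nsq (W *ᵥ x) := Real.sq_sqrt (nsq_nonneg _)
    have hb2 : b ^ 2 = nsq x := Real.sq_sqrt (nsq_nonneg _)
    have hc2 : c ^ 2 = nsq (Wᴴ *ᵥ (W *ᵥ x)) := Real.sq_sqrt (nsq_nonneg _)
    have h1 : c ^ 2 ≤ a ^ 2 := by rw [ha2, hc2]; exact hWWH _
    have h2 : a ^ 2 ≤ b * c := by
      have key := cs_re_dot x ((Wᴴ * W) *ᵥ x)
      rw [dot_conjTranspose_mul, Complex.ofReal_re, ← Matrix.mulVec_mulVec] at key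
      rw [ha2]; exact key
    have hA : 0 ≤ a := Real.sqrt_nonneg _
    have hB : 0 ≤ b := Real.sqrt_nonneg _
    have hC : 0 ≤ c := Real.sqrt_nonneg _
    have : a ^ 2 ≤ b ^ 2 := by nlinarith
    rw [← ha2, ← hb2]; linarith

lemma posDef_smul_one {δ : ℝ} (hδ : 0 < δ) : (((δ:ℂ)) • (1 : Matrix n n ℂ)).PosDef := by
  refine Matrix.posDef_iff_dotProduct_mulVec.mpr ⟨?_, ?_⟩
  · unfold Matrix.IsHermitian
    rw [Matrix.conjTranspose_smul, Matrix.conjTranspose_one]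
    congr 1
    exact Complex.conj_ofReal δ
  · intro x hx
    rw [Matrix.smul_mulVec, Matrix.one_mulVec, dotProduct_smul, smul_eq_mul]
    have h1 : (0:ℂ) < (δ:ℂ) := by rwa [Complex.zero_lt_real]
    exact mul_pos h1 (Matrix.dotProduct_star_self_pos_iff.mpr hx)

lemma key {C U : Matrix n n ℂ} (hU : (1 - U * Uᴴ).PosSemidef) :
    (C * U).trace.re ≤ (matSqrt (Cᴴ * C)).trace.re := by
  have hK : (Cᴴ * C).PosSemidef := posSemidef_conjTranspose_mul_self C
  set S := matSqrt (Cᴴ * C) with hSdef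
  have hS : S.PosSemidef := matSqrt_posSemidef hK
  have hSS : S * S = Cᴴ * C := matSqrt_mul_self hK
  suffices h : ∀ δ : ℝ, 0 < δ → (C * U).trace.re ≤ S.trace.re + δ * (Fintype.card n) by
    by_contra hcon
    push_neg at hcon
    rcases Nat.eq_zero_or_pos (Fintype.card n) with hc | hc
    · have := h 1 one_pos; rw [hc] at this; push_cast at this; linarith
    · set d := ((C * U).trace.re - S.trace.re) / (2 * (Fintype.card n)) with hd
      have hdpos : 0 < d := by
        apply div_pos (by linarith) (by positivity)
      have := h d hdpos
      rw [hd] at this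
      have hcard : (0:ℝ) < (Fintype.card n : ℝ) := by exact_mod_cast hc
      rw [div_mul_eq_mul_div, mul_comm (2:ℝ) _, ← div_div, mul_div_assoc] at this
      rw [div_self hcard.ne'] at this
      linarith
  intro δ hδ
  set dI := ((δ:ℂ)) • (1 : Matrix n n ℂ) with hdI
  set X := S + dI with hX
  have hXpd : X.PosDef := Matrix.PosDef.posSemidef_add hS (posDef_smul_one hδ)
  set g := matSqrt X with hg
  have hgpsd : g.PosSemidef := matSqrt_posSemidef hXpd.posSemidef
  have hgg : g * g = X := matSqrt_mul_self hXpd.posSemidef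
  have hdet : IsUnit g.det := by
    have h1 : g.det * g.det = X.det := by rw [← Matrix.det_mul, hgg]
    have h2 : X.det ≠ 0 := hXpd.det_pos.ne'
    refine isUnit_iff_ne_zero.mpr fun h0 => h2 ?_
    rw [← h1, h0, mul_zero]
  have hgi1 : g * g⁻¹ = 1 := Matrix.mul_nonsing_inv _ hdet
  have hgi2 : g⁻¹ * g = 1 := Matrix.nonsing_inv_mul _ hdet
  have hgherm : gᴴ = g := hgpsd.isHermitian
  have hgiherm : (g⁻¹)ᴴ = g⁻¹ := by
    rw [Matrix.conjTranspose_nonsing_inv, hgherm]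
  set Xi := g⁻¹ * g⁻¹ with hXi
  have hXipsd : Xi.PosSemidef := by
    have := posSemidef_conjTranspose_mul_self g⁻¹
    rwa [hgiherm] at this
  set D := g⁻¹ * Cᴴ - g * U with hD
  have hDexp : Dᴴ * D = C * Xi * Cᴴ - C * U - Uᴴ * Cᴴ + Uᴴ * X * U := by
    have hDH : Dᴴ = C * g⁻¹ - Uᴴ * g := by
      rw [hD, Matrix.conjTranspose_sub, Matrix.conjTranspose_mul,
        Matrix.conjTranspose_mul, hgiherm, hgherm, Matrix.conjTranspose_conjTranspose]
    rw [hDH, hD, Matrix.sub_mul, Matrix.mul_sub, Matrix.mul_sub]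
    have e1 : C * g⁻¹ * (g⁻¹ * Cᴴ) = C * Xi * Cᴴ := by
      simp only [hXi, mul_assoc]
    have e2 : C * g⁻¹ * (g * U) = C * U := by
      rw [mul_assoc, ← mul_assoc g⁻¹ g U, hgi2, one_mul]
    have e3 : Uᴴ * g * (g⁻¹ * Cᴴ) = Uᴴ * Cᴴ := by
      rw [mul_assoc, ← mul_assoc g g⁻¹ Cᴴ, hgi1, one_mul]
    have e4 : Uᴴ * g * (g * U) = Uᴴ * X * U := by
      rw [← hgg]; simp only [mul_assoc]
    rw [e1, e2, e3, e4]
    abel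
  have h0 : 0 ≤ (Dᴴ * D).trace.re := psd_trace_re_nonneg (posSemidef_conjTranspose_mul_self D)
  rw [hDexp] at h0
  rw [Matrix.trace_add, Matrix.trace_sub, Matrix.trace_sub] at h0
  simp only [Complex.add_re, Complex.sub_re] at h0
  have hT2 : (Uᴴ * Cᴴ).trace.re = (C * U).trace.re := by
    rw [← Matrix.conjTranspose_mul, Matrix.trace_conjTranspose]
    exact Complex.conj_re _
  have hXtr : X.trace.re = S.trace.re + δ * (Fintype.card n) := by
    rw [hX, Matrix.trace_add, hdI, Matrix.trace_smul, Matrix.trace_one]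
    simp
  have hT1 : (C * Xi * Cᴴ).trace.re ≤ X.trace.re := by
    have hc : (C * Xi * Cᴴ).trace = (Xi * (Cᴴ * C)).trace := by
      rw [Matrix.trace_mul_comm (C * Xi) Cᴴ, ← mul_assoc]
      exact Matrix.trace_mul_comm _ _
    have hXiX : Xi * (X * X) = X := by
      rw [← hgg, hXi]
      simp only [← mul_assoc]
      rw [mul_assoc g⁻¹ g⁻¹ g, hgi2, mul_one, hgi2, one_mul]
    have hdiff : (X * X - Cᴴ * C).PosSemidef := by
      have hexp : X * X - Cᴴ * C = (δ:ℂ) • S + ((δ:ℂ) • S + (δ:ℂ) • ((δ:ℂ) • 1)) := by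
        rw [hX, ← hSS, hdI]
        simp only [Matrix.add_mul, Matrix.mul_add, Matrix.smul_mul, Matrix.mul_smul,
          one_mul, mul_one]
        module
      rw [hexp]
      exact (psd_smul hS hδ.le).add ((psd_smul hS hδ.le).add
        (psd_smul (psd_smul Matrix.PosSemidef.one hδ.le) hδ.le))
    have hsplit : (Xi * (Cᴴ * C)).trace.re
        = X.trace.re - (Xi * (X * X - Cᴴ * C)).trace.re := by
      rw [Matrix.mul_sub, Matrix.trace_sub, hXiX]
      simp [Complex.sub_re]
    rw [hc, hsplit]
    have := trace_mul_psd_re_nonneg hXipsd hdiff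
    linarith
  have hT3 : (Uᴴ * X * U).trace.re ≤ X.trace.re := by
    have hc : (Uᴴ * X * U).trace = (X * (U * Uᴴ)).trace := by
      rw [Matrix.trace_mul_cycle]
      rw [← mul_assoc, Matrix.trace_mul_comm, ← mul_assoc]
    have hsplit : (X * (U * Uᴴ)).trace.re = X.trace.re - (X * (1 - U * Uᴴ)).trace.re := by
      rw [Matrix.mul_sub, Matrix.trace_sub, mul_one]
      simp [Complex.sub_re]
    rw [hc, hsplit]
    have := trace_mul_psd_re_nonneg hXpd.posSemidef hU
    linarith
  rw [hT2] at h0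
  have h2 : 2 * (C * U).trace.re ≤ 2 * X.trace.re := by linarith
  rw [hXtr] at h2
  linarith

lemma vecMulVec_star_posSemidef (ψ : n → ℂ) : (vecMulVec ψ (star ψ)).PosSemidef := by
  refine Matrix.posSemidef_iff_dotProduct_mulVec.mpr ⟨?_, ?_⟩
  · ext i j
    simp only [conjTranspose_apply, vecMulVec_apply, Pi.star_apply, star_mul', star_star]
    ring
  · intro x
    have hmv : vecMulVec ψ (star ψ) *ᵥ x = (star ψ ⬝ᵥ x) • ψ := by
      ext i
      simp only [mulVec, dotProduct, vecMulVec_apply, Pi.star_apply, Pi.smul_apply,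
        smul_eq_mul, Finset.mul_sum, Finset.sum_mul]
      refine Finset.sum_congr rfl fun j _ => by ring
    rw [hmv, dotProduct_smul, smul_eq_mul]
    have : star x ⬝ᵥ ψ = star (star ψ ⬝ᵥ x) := by
      simp only [dotProduct, star_sum, star_mul', Pi.star_apply, star_star]
      refine Finset.sum_congr rfl fun j _ => by ring
    rw [this, mul_comm]
    set z := star ψ ⬝ᵥ x
    rw [show star z * z = ((Complex.normSq z : ℝ) : ℂ) by rw [mul_comm]; exact Complex.mul_conj z]
    rw [Complex.zero_le_real]
    exact Complex.normSq_nonneg z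

lemma vecMulVec_star_mul_self (ψ : n → ℂ) :
    vecMulVec ψ (star ψ) * vecMulVec ψ (star ψ) = ((nsq ψ : ℝ) : ℂ) • vecMulVec ψ (star ψ) := by
  ext i j
  simp only [mul_apply, vecMulVec_apply, Pi.star_apply, Matrix.smul_apply, smul_eq_mul]
  rw [← star_dot_self ψ]
  simp only [dotProduct, Pi.star_apply]
  rw [Finset.sum_mul]
  refine Finset.sum_congr rfl fun k _ => by ring

lemma trace_vecMulVec_star (ψ : n → ℂ) :
    (vecMulVec ψ (star ψ)).trace = ((nsq ψ : ℝ) : ℂ) := by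
  rw [← star_dot_self ψ]
  simp only [Matrix.trace, Matrix.diag, vecMulVec_apply, Pi.star_apply, dotProduct]
  refine Finset.sum_congr rfl fun k _ => by ring

lemma fid_pure {ρA : Matrix n n ℂ} (h : ρA.PosSemidef) (φ : n → ℂ) :
    fidelity ρA (Matrix.vecMulVec φ (star φ)) = (star φ ⬝ᵥ ρA *ᵥ φ).re := by
  set s := matSqrt ρA with hs
  have hspsd : s.PosSemidef := matSqrt_posSemidef h
  have hss : s * s = ρA := matSqrt_mul_self h
  set ψ := s *ᵥ φ with hψ
  have hherm : ∀ a b, star (s a b) = s b a := fun a b => by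
    rw [show star (s a b) = sᴴ b a from rfl, hspsd.isHermitian.eq]
  have hM : s * Matrix.vecMulVec φ (star φ) * s = vecMulVec ψ (star ψ) := by
    ext i j
    simp only [mul_apply, vecMulVec_apply, Pi.star_apply, hψ, mulVec, dotProduct, star_sum,
      star_mul', hherm, Finset.mul_sum, Finset.sum_mul]
    refine Finset.sum_congr rfl fun l _ => Finset.sum_congr rfl fun k _ => by ring
  have hkey : star φ ⬝ᵥ ρA *ᵥ φ = ((nsq ψ : ℝ) : ℂ) := by
    rw [← hss, hψ]
    rw [(show s * s = sᴴ * s by rw [hspsd.isHermitian.eq])]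
    exact dot_conjTranspose_mul s φ
  rw [fidelity, ← hs, hM, hkey, Complex.ofReal_re]
  rcases eq_or_lt_of_le (nsq_nonneg ψ) with h0 | hpos
  · have hψ0 : ψ = 0 := by
      have h0' : ∑ i, Complex.normSq (ψ i) = 0 := h0.symm
      funext i
      have hall := (Finset.sum_eq_zero_iff_of_nonneg
        (fun j _ => Complex.normSq_nonneg (ψ j))).mp h0'
      simpa using Complex.normSq_eq_zero.mp (hall i (Finset.mem_univ i))
    rw [hψ0]
    have : vecMulVec (0 : n → ℂ) (star (0 : n → ℂ)) = 0 := by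
      ext i j; simp [vecMulVec_apply]
    rw [this, matSqrt_unique Matrix.PosSemidef.zero (by simp)]
    simp [← h0, nsq]
  · set ν := Real.sqrt (nsq ψ) with hν
    have hν2 : ν * ν = nsq ψ := Real.mul_self_sqrt (nsq_nonneg ψ)
    have hνpos : 0 < ν := Real.sqrt_pos.mpr hpos
    set B := (((ν⁻¹ : ℝ)) : ℂ) • vecMulVec ψ (star ψ) with hB
    have hBB : B * B = vecMulVec ψ (star ψ) := by
      rw [hB, Matrix.smul_mul, Matrix.mul_smul, vecMulVec_star_mul_self, smul_smul, smul_smul]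
      rw [(show ((ν⁻¹ : ℝ) : ℂ) * (((ν⁻¹ : ℝ)) : ℂ) * ((nsq ψ : ℝ) : ℂ) = 1 by
        push_cast
        rw [← hν2]
        field_simp
        norm_cast)]
      rw [one_smul]
    have hBpsd : B.PosSemidef := psd_smul (vecMulVec_star_posSemidef ψ) (by positivity)
    rw [matSqrt_unique hBpsd hBB, hB, Matrix.trace_smul, trace_vecMulVec_star]
    simp only [smul_eq_mul, ← Complex.ofReal_mul, Complex.ofReal_re]
    rw [← hν2]
    field_simp

end Helpers

namespace Helpers
open Matrix
variable {A E : Type*} [Fintype A] [DecidableEq A] [Fintype E] [DecidableEq E]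
variable (ρ : Matrix (A × E) (A × E) ℂ) (φ : A → ℂ)

noncomputable def VV (φ : A → ℂ) : Matrix (A × E) E ℂ :=
  Matrix.of fun p e => φ p.1 * (if p.2 = e then 1 else 0)

noncomputable def Va (a : A) : Matrix (A × E) E ℂ :=
  Matrix.of fun p e => (if p.1 = a then 1 else 0) * (if p.2 = e then 1 else 0)

noncomputable def We (e : E) : Matrix (A × E) A ℂ :=
  Matrix.of fun p a => (if p.1 = a then 1 else 0) * (if p.2 = e then 1 else 0)

lemma star_ite' (c : Prop) [Decidable c] (x y : ℂ) :
    star (if c then x else y) = if c then star x else star y := by split <;> rfl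

lemma hφ' (hφ : ∑ a, Complex.normSq (φ a) = 1) : ∑ a, star (φ a) * φ a = (1 : ℂ) := by
  have h : ∀ a, star (φ a) * φ a = ((Complex.normSq (φ a) : ℝ) : ℂ) := fun a => by
    rw [Complex.star_def]
    exact (Complex.normSq_eq_conj_mul_self).symm
  rw [Finset.sum_congr rfl fun a _ => h a, ← Complex.ofReal_sum, hφ, Complex.ofReal_one]

lemma VV_conjT_mul_self (hφ : ∑ a, Complex.normSq (φ a) = 1) :
    (VV (E := E) φ)ᴴ * VV (E := E) φ = (1 : Matrix E E ℂ) := by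
  ext e e'
  simp only [mul_apply, conjTranspose_apply, VV, of_apply, Fintype.sum_prod_type,
    star_ite', star_mul', star_one, star_zero, mul_ite, ite_mul, mul_one, one_mul,
    mul_zero, zero_mul, Finset.sum_ite_eq, Finset.sum_ite_eq', Finset.mem_univ, if_true,
    one_apply]
  by_cases h : e = e'
  · subst h
    simpa using hφ' φ hφ
  · simp [h]
    intro h'
    exact absurd h'.symm h

lemma kron_eq (Y : Matrix E E ℂ) :
    (Matrix.vecMulVec φ (star φ)) ⊗ₖ Y = VV (E := E) φ * Y * (VV (E := E) φ)ᴴ := by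
  ext p q
  simp only [kroneckerMap_apply, vecMulVec_apply, Pi.star_apply, mul_apply,
    conjTranspose_apply, VV, of_apply, star_ite', star_mul', star_one, star_zero,
    mul_ite, ite_mul, mul_one, one_mul, mul_zero, zero_mul, Finset.sum_ite_eq,
    Finset.sum_ite_eq', Finset.mem_univ, if_true]
  ring

lemma VV_sum : VV (E := E) φ = ∑ a, φ a • Va a := by
  ext p e
  simp only [VV, of_apply, Matrix.sum_apply, Matrix.smul_apply, Va, smul_eq_mul,
    mul_ite, ite_mul, mul_one, mul_zero, zero_mul, one_mul,
    Finset.sum_ite_eq, Finset.sum_ite_eq', Finset.mem_univ, if_true]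
  by_cases hpe : p.2 = e <;>
    simp [hpe, Finset.sum_ite_eq, Finset.sum_ite_eq']

lemma rhoE_eq :
    (Matrix.of fun e e' : E => ∑ a, ρ (a, e) (a, e')) = ∑ a : A, (Va (E := E) a)ᴴ * ρ * (Va (E := E) a) := by
  ext e e'
  simp only [of_apply, Matrix.sum_apply, mul_apply, conjTranspose_apply, Va,
    Fintype.sum_prod_type, star_ite', star_mul', star_one, star_zero,
    mul_ite, ite_mul, mul_one, one_mul, mul_zero, zero_mul,
    Finset.sum_ite_eq, Finset.sum_ite_eq', Finset.mem_univ, if_true]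

lemma rhoA_eq :
    (Matrix.of fun a a' : A => ∑ e, ρ (a, e) (a', e)) = ∑ e : E, (We (A := A) e)ᴴ * ρ * (We (A := A) e) := by
  ext a a'
  simp only [of_apply, Matrix.sum_apply, mul_apply, conjTranspose_apply, We,
    Fintype.sum_prod_type, star_ite', star_mul', star_one, star_zero,
    mul_ite, ite_mul, mul_one, one_mul, mul_zero, zero_mul,
    Finset.sum_ite_eq, Finset.sum_ite_eq', Finset.mem_univ, if_true]

lemma trZ_eq :
    ((VV (E := E) φ)ᴴ * ρ * VV (E := E) φ).trace
      = star φ ⬝ᵥ ((Matrix.of fun a a' : A => ∑ e, ρ (a, e) (a', e)) *ᵥ φ) := by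
  simp only [Matrix.trace, Matrix.diag, mul_apply, conjTranspose_apply, VV, of_apply,
    Fintype.sum_prod_type, star_ite', star_mul', star_one, star_zero,
    mul_ite, ite_mul, mul_one, one_mul, mul_zero, zero_mul,
    Finset.sum_ite_eq, Finset.sum_ite_eq', Finset.mem_univ, if_true,
    Matrix.mulVec, dotProduct, Pi.star_apply, Finset.mul_sum, Finset.sum_mul]
  conv_lhs => rw [Finset.sum_comm]
  conv_lhs => enter [2, a]; rw [Finset.sum_comm]
  conv_lhs => rw [Finset.sum_comm]
  refine Finset.sum_congr rfl fun a _ => Finset.sum_congr rfl fun a' _ =>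
    Finset.sum_congr rfl fun e _ => by ring

end Helpers

set_option maxHeartbeats 1000000 in
open Matrix Helpers in
/-- **Lemma 1 of the paper.** For a bipartite state `ρ` on `A × E` with marginals `ρ_A`,
`ρ_E`, and any unit vector `φ` on `A`,
`F(ρ, P_φ ⊗ ρ_E) ≥ (F(ρ_A, P_φ))²` where `P_φ` is the rank-one projection onto `φ`. -/
theorem statement4 {A E : Type*} [Fintype A] [DecidableEq A] [Nonempty A]
    [Fintype E] [DecidableEq E] [Nonempty E]
    (ρ : Matrix (A × E) (A × E) ℂ) (hρ : ρ.PosSemidef) (htr : ρ.trace = 1)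
    (φ : A → ℂ) (hφ : ∑ a, Complex.normSq (φ a) = 1) :
    (fidelity (Matrix.of fun a a' : A => ∑ e, ρ (a, e) (a', e))
        (Matrix.vecMulVec φ (star φ))) ^ 2
      ≤ fidelity ρ
          ((Matrix.vecMulVec φ (star φ)) ⊗ₖ
            (Matrix.of fun e e' : E => ∑ a, ρ (a, e) (a, e'))) := by
  have hρA_psd : (Matrix.of fun a a' : A => ∑ e, ρ (a, e) (a', e)).PosSemidef := by
    rw [rhoA_eq ρ]
    exact psd_sum _ _ fun e _ => hρ.conjTranspose_mul_mul_same (We e)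
  have hρE_psd : (Matrix.of fun e e' : E => ∑ a, ρ (a, e) (a, e')).PosSemidef := by
    rw [rhoE_eq ρ]
    exact psd_sum _ _ fun a _ => hρ.conjTranspose_mul_mul_same (Va a)
  set ρE : Matrix E E ℂ := Matrix.of fun e e' : E => ∑ a, ρ (a, e) (a, e') with hρEdef
  set V : Matrix (A × E) E ℂ := VV (E := E) φ with hVdef
  have hVV : Vᴴ * V = 1 := VV_conjT_mul_self φ hφ
  set Z : Matrix E E ℂ := Vᴴ * ρ * V with hZdef
  have hZpsd : Z.PosSemidef := hρ.conjTranspose_mul_mul_same V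
  -- the key operator inequality Z ≤ ρE
  have hVHsum : Vᴴ = ∑ a, star (φ a) • (Va (E := E) a)ᴴ := by
    rw [hVdef, VV_sum φ, Matrix.conjTranspose_sum]
    exact Finset.sum_congr rfl fun a _ => by rw [Matrix.conjTranspose_smul]
  have hsum1 : ∑ a : A, (Va (E := E) a)ᴴ * ρ * Va (E := E) a = ρE := by
    rw [hρEdef]; exact (rhoE_eq ρ).symm
  have hsum2 : ∑ a, star (φ a) • ((Va (E := E) a)ᴴ * ρ * V) = Z := by
    calc ∑ a, star (φ a) • ((Va (E := E) a)ᴴ * ρ * V)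
        = ∑ a, (star (φ a) • (Va (E := E) a)ᴴ) * (ρ * V) := by
          refine Finset.sum_congr rfl fun a _ => ?_
          rw [Matrix.smul_mul, Matrix.mul_assoc]
      _ = (∑ a, star (φ a) • (Va (E := E) a)ᴴ) * (ρ * V) := by rw [Matrix.sum_mul]
      _ = Vᴴ * (ρ * V) := by rw [← hVHsum]
      _ = Z := by rw [hZdef, Matrix.mul_assoc]
  have hsum3 : ∑ a, φ a • (Vᴴ * ρ * Va (E := E) a) = Z := by
    calc ∑ a, φ a • (Vᴴ * ρ * Va (E := E) a)
        = ∑ a, (Vᴴ * ρ) * (φ a • Va (E := E) a) := by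
          refine Finset.sum_congr rfl fun a _ => ?_
          rw [Matrix.mul_smul]
      _ = (Vᴴ * ρ) * (∑ a, φ a • Va (E := E) a) := by rw [Matrix.mul_sum]
      _ = Z := by rw [← VV_sum φ, ← hVdef, hZdef]
  have hsum4 : ∑ a, (φ a * star (φ a)) • (Vᴴ * ρ * V) = Z := by
    rw [← Finset.sum_smul]
    rw [show ∑ a, φ a * star (φ a) = (1:ℂ) by
      rw [← hφ' φ hφ]; exact Finset.sum_congr rfl fun a _ => mul_comm _ _]
    rw [one_smul, hZdef]
  have hterm : ∀ a : A,
      ((Va (E := E) a) - star (φ a) • V)ᴴ * ρ * ((Va (E := E) a) - star (φ a) • V)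
        = (Va (E := E) a)ᴴ * ρ * Va (E := E) a
          - star (φ a) • ((Va (E := E) a)ᴴ * ρ * V)
          - φ a • (Vᴴ * ρ * Va (E := E) a)
          + (φ a * star (φ a)) • (Vᴴ * ρ * V) := by
    intro a
    simp only [Matrix.conjTranspose_sub, Matrix.conjTranspose_smul, star_star,
      Matrix.sub_mul, Matrix.mul_sub, Matrix.smul_mul, Matrix.mul_smul, smul_smul]
    module
  have hZle : (ρE - Z).PosSemidef := by
    have hexp : ∑ a, ((Va (E := E) a) - star (φ a) • V)ᴴ * ρ *
        ((Va (E := E) a) - star (φ a) • V) = ρE - Z := by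
      rw [Finset.sum_congr rfl fun a _ => hterm a]
      rw [Finset.sum_add_distrib, Finset.sum_sub_distrib, Finset.sum_sub_distrib]
      rw [hsum1, hsum2, hsum3, hsum4]
      abel
    rw [← hexp]
    exact psd_sum _ _ fun a _ => hρ.conjTranspose_mul_mul_same _
  -- square roots
  set r := matSqrt ρE with hrdef
  have hrpsd : r.PosSemidef := matSqrt_posSemidef hρE_psd
  have hrr : r * r = ρE := matSqrt_mul_self hρE_psd
  have hrherm : rᴴ = r := hrpsd.isHermitian
  set s := matSqrt ρ with hsdef
  have hspsd : s.PosSemidef := matSqrt_posSemidef hρ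
  have hss : s * s = ρ := matSqrt_mul_self hρ
  have hsherm : sᴴ = s := hspsd.isHermitian
  have hσeq : (Matrix.vecMulVec φ (star φ)) ⊗ₖ ρE = V * ρE * Vᴴ := by
    rw [hVdef]; exact kron_eq φ ρE
  have hsqVrV : (V * r * Vᴴ) * (V * r * Vᴴ) = V * ρE * Vᴴ := by
    simp only [Matrix.mul_assoc]
    rw [← Matrix.mul_assoc Vᴴ V (r * Vᴴ), hVV, Matrix.one_mul, ← Matrix.mul_assoc r r Vᴴ, hrr]
  set Cm := (V * r * Vᴴ) * s with hCm
  have hVrVherm : (V * r * Vᴴ)ᴴ = V * r * Vᴴ := by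
    rw [Matrix.conjTranspose_mul, Matrix.conjTranspose_mul,
      Matrix.conjTranspose_conjTranspose, hrherm, Matrix.mul_assoc]
  have hCmH : Cmᴴ = s * (V * r * Vᴴ) := by
    rw [hCm, Matrix.conjTranspose_mul, hVrVherm, hsherm]
  have hKeq : Cmᴴ * Cm = s * ((Matrix.vecMulVec φ (star φ)) ⊗ₖ ρE) * s := by
    rw [hCmH, hCm, hσeq]
    simp only [Matrix.mul_assoc]
    rw [← Matrix.mul_assoc Vᴴ V (r * (Vᴴ * s)), hVV, Matrix.one_mul, ← Matrix.mul_assoc r r (Vᴴ * s), hrr]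
  have hTnonneg : 0 ≤ (matSqrt (Cmᴴ * Cm)).trace.re :=
    psd_trace_re_nonneg (matSqrt_posSemidef (Matrix.posSemidef_conjTranspose_mul_self Cm))
  have hZtr : Z.trace = star φ ⬝ᵥ ((Matrix.of fun a a' : A => ∑ e, ρ (a, e) (a', e)) *ᵥ φ) := by
    rw [hZdef, hVdef]; exact trZ_eq ρ φ
  have hc_nonneg : 0 ≤ Z.trace.re := by
    rw [hZtr]
    have h := hρA_psd.dotProduct_mulVec_nonneg φ
    rw [Complex.le_def] at h
    simpa using h.1
  -- main inequality, with an epsilon of room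
  have hδmain : ∀ δ : ℝ, 0 < δ →
      Z.trace.re ≤ (matSqrt (Cmᴴ * Cm)).trace.re + δ * r.trace.re := by
    intro δ hδ
    have hrd : (r + (δ:ℂ) • 1).PosDef := Matrix.PosDef.posSemidef_add hrpsd (posDef_smul_one hδ)
    have hdet : IsUnit (r + (δ:ℂ) • 1).det := (Matrix.isUnit_iff_isUnit_det _).mp hrd.isUnit
    set B := (r + (δ:ℂ) • 1)⁻¹ with hBdef
    have hB1 : (r + (δ:ℂ) • 1) * B = 1 := Matrix.mul_nonsing_inv _ hdet
    have hB2 : B * (r + (δ:ℂ) • 1) = 1 := Matrix.nonsing_inv_mul _ hdet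
    have hBherm : Bᴴ = B := by
      rw [hBdef, Matrix.conjTranspose_nonsing_inv, hrd.isHermitian.eq]
    have hBpsd : B.PosSemidef := hrd.inv.posSemidef
    have hBr : B * r = 1 - (δ:ℂ) • B := by
      have h := hB2
      rw [Matrix.mul_add, Matrix.mul_smul, Matrix.mul_one] at h
      rw [← h]; abel
    have hrB : r * B = 1 - (δ:ℂ) • B := by
      have h := hB1
      rw [Matrix.add_mul, Matrix.smul_mul, Matrix.one_mul] at h
      rw [← h]; abel
    have hBrpsd : (1 - (δ:ℂ) • B).PosSemidef := by
      rw [← hBr]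
      have e : B * r = Bᴴ * (r * (r + (δ:ℂ) • 1)) * B := by
        rw [hBherm]
        calc B * r = B * r * ((r + (δ:ℂ) • 1) * B) := by rw [hB1, Matrix.mul_one]
          _ = B * (r * (r + (δ:ℂ) • 1)) * B := by simp only [Matrix.mul_assoc]
      rw [e]
      refine Matrix.PosSemidef.conjTranspose_mul_mul_same ?_ B
      rw [show r * (r + (δ:ℂ) • 1) = r * r + (δ:ℂ) • r by
        rw [Matrix.mul_add, Matrix.mul_smul, Matrix.mul_one], hrr]
      exact hρE_psd.add (psd_smul hrpsd hδ.le)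
    -- the contraction
    set W := (V * B * Vᴴ) * s with hWdef
    have hVBVherm : (V * B * Vᴴ)ᴴ = V * B * Vᴴ := by
      rw [Matrix.conjTranspose_mul, Matrix.conjTranspose_mul,
        Matrix.conjTranspose_conjTranspose, hBherm, Matrix.mul_assoc]
    have hWH : Wᴴ = s * (V * B * Vᴴ) := by
      rw [hWdef, Matrix.conjTranspose_mul, hVBVherm, hsherm]
    have hWWH : W * Wᴴ = V * (B * Z * B) * Vᴴ := by
      rw [hWdef, hWH, hZdef]
      simp only [Matrix.mul_assoc]
      rw [← Matrix.mul_assoc s s (V * (B * Vᴴ)), hss]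
    have hQpsd : (1 - V * Vᴴ).PosSemidef := by
      refine proj_compl_psd ?_ ?_
      · unfold Matrix.IsHermitian
        rw [Matrix.conjTranspose_mul, Matrix.conjTranspose_conjTranspose]
      · calc V * Vᴴ * (V * Vᴴ) = V * ((Vᴴ * V) * Vᴴ) := by simp only [Matrix.mul_assoc]
          _ = V * Vᴴ := by rw [hVV, Matrix.one_mul]
    have hBρEB : B * ρE * B = (1 - (δ:ℂ) • B) * (1 - (δ:ℂ) • B) := by
      rw [show ((1 : Matrix E E ℂ) - (δ:ℂ) • B) * (1 - (δ:ℂ) • B) = (B * r) * (r * B) by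
        rw [hBr, hrB], ← hrr]
      simp only [Matrix.mul_assoc]
    set EE := (δ:ℂ) • B with hEE
    have hEEpsd : EE.PosSemidef := psd_smul hBpsd hδ.le
    set FF := matSqrt EE with hFFdef
    have hFFpsd : FF.PosSemidef := matSqrt_posSemidef hEEpsd
    have hFF2 : FF * FF = EE := matSqrt_mul_self hEEpsd
    have h2E : ((1 : Matrix E E ℂ) - EE + 1).PosSemidef := hBrpsd.add Matrix.PosSemidef.one
    have hsq1 : ((1 : Matrix E E ℂ) - (1 - EE) * (1 - EE)) = FFᴴ * ((1 - EE) + 1) * FF := by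
      rw [hFFpsd.isHermitian.eq, ← hFF2]
      noncomm_ring
    have h1mEE : ((1 : Matrix E E ℂ) - B * Z * B).PosSemidef := by
      have e1 : B * (ρE - Z) * B = B * ρE * B - B * Z * B := by
        rw [Matrix.mul_sub, Matrix.sub_mul]
      have hsplit : (1 : Matrix E E ℂ) - B * Z * B
          = Bᴴ * (ρE - Z) * B + (1 - (1 - EE) * (1 - EE)) := by
        rw [hBherm, e1, hBρEB, hEE]
        abel
      rw [hsplit, hsq1]
      exact (hZle.conjTranspose_mul_mul_same B).add (h2E.conjTranspose_mul_mul_same FF)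
    have hcontr : (1 - W * Wᴴ).PosSemidef := by
      have hsplit : 1 - W * Wᴴ = (1 - V * Vᴴ) + V * (1 - B * Z * B) * Vᴴ := by
        rw [hWWH, Matrix.mul_sub, Matrix.sub_mul, Matrix.mul_one]
        abel
      rw [hsplit]
      exact hQpsd.add (h1mEE.mul_mul_conjTranspose_same V)
    have hU : (1 - (s * (V * B * Vᴴ)) * (s * (V * B * Vᴴ))ᴴ).PosSemidef := by
      have h1 : (s * (V * B * Vᴴ))ᴴ = W := by
        rw [Matrix.conjTranspose_mul, hVBVherm, hsherm, hWdef]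
      rw [h1, show s * (V * B * Vᴴ) = Wᴴ from hWH.symm]
      exact flip_contraction hcontr
    have hkey := key (C := Cm) hU
    have hCU : Cm * (s * (V * B * Vᴴ)) = V * (r * Z * B) * Vᴴ := by
      rw [hCm, hZdef]
      simp only [Matrix.mul_assoc]
      rw [← Matrix.mul_assoc s s (V * (B * Vᴴ)), hss]
    have htr1 : (V * (r * Z * B) * Vᴴ).trace = (r * Z * B).trace := by
      rw [Matrix.trace_mul_cycle, ← Matrix.mul_assoc, hVV, Matrix.one_mul]
    have htr2 : (r * Z * B).trace = Z.trace - (δ:ℂ) * (Z * B).trace := by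
      calc (r * Z * B).trace = (Z * (B * r)).trace := by
            rw [Matrix.trace_mul_cycle r Z B, Matrix.trace_mul_comm (B * r) Z]
        _ = (Z * (1 - (δ:ℂ) • B)).trace := by rw [hBr]
        _ = Z.trace - (δ:ℂ) * (Z * B).trace := by
            rw [Matrix.mul_sub, Matrix.mul_one, Matrix.mul_smul, Matrix.trace_sub, Matrix.trace_smul]
            simp [smul_eq_mul]
    have hZBle : (Z * B).trace.re ≤ r.trace.re := by
      have h1 : 0 ≤ ((ρE - Z) * B).trace.re := trace_mul_psd_re_nonneg hZle hBpsd
      have h2 : ((ρE - Z) * B).trace = (ρE * B).trace - (Z * B).trace := by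
        rw [Matrix.sub_mul, Matrix.trace_sub]
      have h3 : (ρE * B).trace = r.trace - (δ:ℂ) * (r * B).trace := by
        calc (ρE * B).trace = (r * (r * B)).trace := by rw [← hrr, Matrix.mul_assoc]
          _ = (r * (1 - (δ:ℂ) • B)).trace := by rw [hrB]
          _ = r.trace - (δ:ℂ) * (r * B).trace := by
              rw [Matrix.mul_sub, Matrix.mul_one, Matrix.mul_smul, Matrix.trace_sub, Matrix.trace_smul]
              simp [smul_eq_mul]
      have h4 : 0 ≤ (r * B).trace.re := trace_mul_psd_re_nonneg hrpsd hBpsd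
      rw [h2] at h1
      have h5 := congrArg Complex.re h3
      simp only [Complex.sub_re] at h1 h5
      rw [show ((δ:ℂ) * (r * B).trace).re = δ * (r * B).trace.re from by
        rw [Complex.re_ofReal_mul]] at h5
      nlinarith
    rw [hCU] at hkey
    have e := congrArg Complex.re (htr1.trans htr2)
    simp only [Complex.sub_re] at e
    rw [show ((δ:ℂ) * (Z * B).trace).re = δ * (Z * B).trace.re from by
      rw [Complex.re_ofReal_mul]] at e
    rw [e] at hkey
    have hb : δ * (Z * B).trace.re ≤ δ * r.trace.re :=
      mul_le_mul_of_nonneg_left hZBle hδ.le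
    linarith
  -- remove the epsilon
  have hMnonneg : 0 ≤ r.trace.re := psd_trace_re_nonneg hrpsd
  have hmain : Z.trace.re ≤ (matSqrt (Cmᴴ * Cm)).trace.re := by
    by_contra hcon
    push_neg at hcon
    set M := r.trace.re with hM
    set δ0 := (Z.trace.re - (matSqrt (Cmᴴ * Cm)).trace.re) / (2 * (M + 1)) with hδ0
    have hδ0pos : 0 < δ0 := by
      apply div_pos (by linarith) (by positivity)
    have h := hδmain δ0 hδ0pos
    have hb : δ0 * M ≤ δ0 * (M + 1) := by nlinarith
    have heq : δ0 * (M + 1) = (Z.trace.re - (matSqrt (Cmᴴ * Cm)).trace.re) / 2 := by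
      rw [hδ0]
      field_simp
    linarith
  -- conclude
  rw [fid_pure hρA_psd φ, fidelity, ← hsdef, ← hKeq, ← hZtr]
  exact pow_le_pow_left₀ hc_nonneg hmain 2
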